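/- (Open-loop safety under total packet loss.) Under the setting of the multi-horizon MPC for tracking, suppose the problem P(x₀) is feasible, with feasible trajectories x_(0),…,x_(N), inputs u_(0),…,u_(N−1), and steady pair (x̄, ū) satisfying (x_(h₁), x̄, ū) ∈ O_∞^MH. If the plant applies the first h₁ planned inputs u_(0),…,u_(h₁−1) and thereafter applies the auxiliary law u_t = K(x̄ − x_t) + ū for all t ≥ h₁, then the resulting closed-loop trajectory of x_{t+1} = A x_t + B u_t satisfies x_t ∈ X and u_t ∈ U for every t ≥ 0. -/

import Mathlib

open Matrix

/-- Coarse multi-horizon input matrix `B_i = ∑_{j=0}^{i-1} A^j B`. -/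
noncomputable def Bcoarse {n m : ℕ} (A : Matrix (Fin n) (Fin n) ℝ)
    (B : Matrix (Fin n) (Fin m) ℝ) (i : ℕ) : Matrix (Fin n) (Fin m) ℝ :=
  ∑ j ∈ Finset.range i, A ^ j * B

/-- Feasibility of the coarse tail problem along a list of granularities `steps`: from the state
`x` there exist inputs in `U` such that all successor states generated by the coarse dynamics
`x ↦ A^i x + B_i u` lie in `X`. -/
def tailFeasible {n m : ℕ} (A : Matrix (Fin n) (Fin n) ℝ) (B : Matrix (Fin n) (Fin m) ℝ)
    (X : Set (Fin n → ℝ)) (U : Set (Fin m → ℝ)) : List ℕ → (Fin n → ℝ) → Prop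
  | [], _ => True
  | i :: rest, x => ∃ u ∈ U,
      (A ^ i).mulVec x + (Bcoarse A B i).mulVec u ∈ X ∧
      tailFeasible A B X U rest ((A ^ i).mulVec x + (Bcoarse A B i).mulVec u)

/-- The flattened list of granularities of the tail sub-intervals: given the horizon tail
`hs = [h₂, …, h_H]`, the `j`-th entry of `hs` (granularity `j + 2`) contributes `h_{j+2}` steps. -/
def tailSteps (hs : List ℕ) : List ℕ :=
  hs.zipIdx.flatMap fun p => List.replicate p.1 (p.2 + 2)

/-- The set `X₀⁽²⁾` of states in `X` from which the coarse tail problem (sub-intervals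
`i = 2, …, H`) admits a feasible input sequence. -/
def X02 {n m : ℕ} (A : Matrix (Fin n) (Fin n) ℝ) (B : Matrix (Fin n) (Fin m) ℝ)
    (X : Set (Fin n → ℝ)) (U : Set (Fin m → ℝ)) (hs : List ℕ) : Set (Fin n → ℝ) :=
  {x | x ∈ X ∧ tailFeasible A B X U (tailSteps hs) x}

/-- The extended block matrix `A_e = [[A - BK, BK, B], [0, I_n, 0], [0, 0, I_m]]`. -/
noncomputable def Ae {n m : ℕ} (A : Matrix (Fin n) (Fin n) ℝ) (B : Matrix (Fin n) (Fin m) ℝ)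
    (K : Matrix (Fin m) (Fin n) ℝ) :
    Matrix ((Fin n ⊕ Fin n) ⊕ Fin m) ((Fin n ⊕ Fin n) ⊕ Fin m) ℝ :=
  Matrix.fromBlocks
    (Matrix.fromBlocks (A - B * K) (B * K) 0 1)
    (Matrix.fromRows B 0)
    0 1

/-- The extended state vector `w = (x, x̄, ū) ∈ ℝ^{2n+m}`. -/
def toVec {n m : ℕ} (x xb : Fin n → ℝ) (ub : Fin m → ℝ) : ((Fin n ⊕ Fin n) ⊕ Fin m) → ℝ :=
  Sum.elim (Sum.elim x xb) ub

/-- Projection onto the state component `x` of the extended state. -/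
def projX {n m : ℕ} (w : ((Fin n ⊕ Fin n) ⊕ Fin m) → ℝ) : Fin n → ℝ :=
  fun i => w (Sum.inl (Sum.inl i))

/-- Projection onto the steady-state component `x̄` of the extended state. -/
def projXbar {n m : ℕ} (w : ((Fin n ⊕ Fin n) ⊕ Fin m) → ℝ) : Fin n → ℝ :=
  fun i => w (Sum.inl (Sum.inr i))

/-- Projection onto the steady-input component `ū` of the extended state. -/
def projUbar {n m : ℕ} (w : ((Fin n ⊕ Fin n) ⊕ Fin m) → ℝ) : Fin m → ℝ :=
  fun i => w (Sum.inr i)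

/-- The multi-horizon constraint set
`W_MH = { (x, x̄, ū) : x ∈ X₀⁽²⁾, K (x̄ - x) + ū ∈ U }`. -/
def WMH {n m : ℕ} (A : Matrix (Fin n) (Fin n) ℝ) (B : Matrix (Fin n) (Fin m) ℝ)
    (K : Matrix (Fin m) (Fin n) ℝ) (X : Set (Fin n → ℝ)) (U : Set (Fin m → ℝ))
    (hs : List ℕ) : Set (((Fin n ⊕ Fin n) ⊕ Fin m) → ℝ) :=
  {w | projX w ∈ X02 A B X U hs ∧ K.mulVec (projXbar w - projX w) + projUbar w ∈ U}

/-- The multi-horizon maximal output admissible set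
`O_∞^MH = { w : A_e^k w ∈ W_MH for all k ≥ 0 }`. -/
def OinfMH {n m : ℕ} (A : Matrix (Fin n) (Fin n) ℝ) (B : Matrix (Fin n) (Fin m) ℝ)
    (K : Matrix (Fin m) (Fin n) ℝ) (X : Set (Fin n → ℝ)) (U : Set (Fin m → ℝ))
    (hs : List ℕ) : Set (((Fin n ⊕ Fin n) ⊕ Fin m) → ℝ) :=
  {w | ∀ k : ℕ, ((Ae A B K) ^ k).mulVec w ∈ WMH A B K X U hs}

/-- The flattened list of granularities of the whole horizon division `H = [h₁, h₂, …, h_H]`: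
`h₁` steps of granularity `1` followed by the coarse tail steps. Its length is the total
horizon length `N = ∑ h_i`. -/
def fullSteps (h1 : ℕ) (hs : List ℕ) : List ℕ :=
  List.replicate h1 1 ++ tailSteps hs

/-- `FeasibleWit A B K X U h1 hs x xs us xb ub` states that the sequences `xs`, `us` and the
steady pair `(xb, ub)` witness feasibility of the multi-horizon tracking MPC problem at state
`x`. -/
def FeasibleWit {n m : ℕ} (A : Matrix (Fin n) (Fin n) ℝ) (B : Matrix (Fin n) (Fin m) ℝ)
    (K : Matrix (Fin m) (Fin n) ℝ) (X : Set (Fin n → ℝ)) (U : Set (Fin m → ℝ))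
    (h1 : ℕ) (hs : List ℕ) (x : Fin n → ℝ)
    (xs : ℕ → Fin n → ℝ) (us : ℕ → Fin m → ℝ) (xb : Fin n → ℝ) (ub : Fin m → ℝ) : Prop :=
  xs 0 = x ∧
  (∀ k < (fullSteps h1 hs).length,
    xs (k + 1) = (A ^ ((fullSteps h1 hs).getD k 1)).mulVec (xs k) +
      (Bcoarse A B ((fullSteps h1 hs).getD k 1)).mulVec (us k)) ∧
  (∀ k < (fullSteps h1 hs).length, xs k ∈ X ∧ us k ∈ U) ∧
  toVec (xs h1) xb ub ∈ OinfMH A B K X U hs ∧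
  (A - 1).mulVec xb + B.mulVec ub = 0


lemma Bcoarse_one {n m : ℕ} (A : Matrix (Fin n) (Fin n) ℝ) (B : Matrix (Fin n) (Fin m) ℝ) :
    Bcoarse A B 1 = B := by
  simp [Bcoarse]

lemma Ae_mulVec {n m : ℕ} (A : Matrix (Fin n) (Fin n) ℝ) (B : Matrix (Fin n) (Fin m) ℝ)
    (K : Matrix (Fin m) (Fin n) ℝ) (y xb : Fin n → ℝ) (ub : Fin m → ℝ) :
    (Ae A B K).mulVec (toVec y xb ub)
      = toVec (A.mulVec y + B.mulVec (K.mulVec (xb - y) + ub)) xb ub := by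
  have h1 : (Ae A B K).mulVec (toVec y xb ub)
      = Sum.elim ((Matrix.fromBlocks (A - B * K) (B * K) 0 1).mulVec (Sum.elim y xb)
          + (Matrix.fromRows B 0).mulVec ub)
          ((0 : Matrix _ _ ℝ).mulVec (Sum.elim y xb)
            + (1 : Matrix (Fin m) (Fin m) ℝ).mulVec ub) := by
    simp [Ae, toVec, Matrix.fromBlocks_mulVec]
  rw [h1]
  ext i
  rcases i with (i | i) | i <;>
    simp [toVec, Matrix.fromBlocks_mulVec, Matrix.fromRows_mulVec, Matrix.sub_mulVec,
      Matrix.mulVec_add, Matrix.mulVec_sub, Matrix.mulVec_mulVec] <;> ring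

/-- open-loop safety under total packet loss. If the multi-horizon MPC problem
at `x₀` is feasible, with feasible trajectory `xs`, inputs `us` and steady pair `(x̄, ū)`, and the
plant applies the first `h₁` planned inputs and thereafter the auxiliary law
`u_t = K (x̄ - x_t) + ū`, then the closed-loop trajectory of `x_{t+1} = A x_t + B u_t` satisfies
`x_t ∈ X` and `u_t ∈ U` for every `t ≥ 0`. -/
theorem open_loop_safety
    {n m : ℕ} (A : Matrix (Fin n) (Fin n) ℝ) (B : Matrix (Fin n) (Fin m) ℝ)
    (K : Matrix (Fin m) (Fin n) ℝ) (X : Set (Fin n → ℝ)) (U : Set (Fin m → ℝ))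
    (h1 : ℕ) (hs : List ℕ) (hh1 : 1 ≤ h1)
    (x₀ : Fin n → ℝ) (xs : ℕ → Fin n → ℝ) (us : ℕ → Fin m → ℝ)
    (xb : Fin n → ℝ) (ub : Fin m → ℝ)
    (hfeas : FeasibleWit A B K X U h1 hs x₀ xs us xb ub)
    (x : ℕ → Fin n → ℝ) (hx0 : x 0 = x₀)
    (hdyn : ∀ t, x (t + 1) = A.mulVec (x t) +
      B.mulVec (if t < h1 then us t else K.mulVec (xb - x t) + ub)) :
    ∀ t, x t ∈ X ∧ (if t < h1 then us t else K.mulVec (xb - x t) + ub) ∈ U := by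
  obtain ⟨hx0', hdyn', hcon, hOinf, _⟩ := hfeas
  have hlenge : h1 ≤ (fullSteps h1 hs).length := by
    simp [fullSteps]
  have hget : ∀ t, t < h1 → (fullSteps h1 hs).getD t 1 = 1 := by
    intro t ht
    have hlt : t < (List.replicate h1 (1 : ℕ)).length := by simpa using ht
    unfold fullSteps
    rw [List.getD_append _ _ _ _ hlt]
    simp [List.getD_eq_getElem?_getD, List.getElem?_replicate, ht]
  have hxeq : ∀ t, t ≤ h1 → x t = xs t := by
    intro t
    induction t with
    | zero => intro _; rw [hx0, hx0']
    | succ t ih =>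
      intro ht
      have ht' : t < h1 := ht
      rw [hdyn t, if_pos ht', hdyn' t (lt_of_lt_of_le ht' hlenge), hget t ht', pow_one,
        Bcoarse_one, ih ht'.le]
  have hAe : ∀ k, ((Ae A B K) ^ k).mulVec (toVec (xs h1) xb ub) = toVec (x (h1 + k)) xb ub := by
    intro k
    induction k with
    | zero => simp [Matrix.one_mulVec, hxeq h1 le_rfl]
    | succ k ih =>
      rw [pow_succ', ← Matrix.mulVec_mulVec, ih, Ae_mulVec, ← Nat.add_assoc,
        hdyn (h1 + k), if_neg (by omega)]
  intro t
  by_cases ht : t < h1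
  · rw [if_pos ht]
    obtain ⟨hX, hU⟩ := hcon t (lt_of_lt_of_le ht hlenge)
    exact ⟨(hxeq t ht.le) ▸ hX, hU⟩
  · rw [if_neg ht]
    have hw := hOinf (t - h1)
    rw [hAe (t - h1), Nat.add_sub_cancel' (le_of_not_gt ht)] at hw
    obtain ⟨hX02, hU⟩ := hw
    simp only [X02, projX, projXbar, projUbar, toVec, Sum.elim_inl, Sum.elim_inr,
      Set.mem_setOf_eq] at hX02 hU
    exact ⟨hX02.1, hU⟩
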